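/- Let k ∈ (−1,1) and η ∈ (0,π/2), and set p = √((1−k)/(1+k)). Define v : [0,∞) → ℝ by v(u) = (sin η/(2√(1−k)))·[ (U + √(1+U²))^p − (√(1+U²) − U)^p ], where U = √(1+k)·u/cos η. Then v(0) = 0 and for all u ≥ 0, v′(u) = √(sin²η + (1−k)v(u)²) / √(cos²η + (1+k)u²). In particular v′(0) = tan η, and the curve u ↦ (u, v(u)) is the unparametrized geodesic of the generalized Taub-NUT polytope metric emanating from the origin at angle η. -/

import Mathlib

open Real

/-- The explicit unparametrized geodesic of the generalized Taub-NUT polytope metric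
emanating from the origin at angle `η`, written as a graph `u ↦ v(u)`. -/
noncomputable def geoGraph (k η : ℝ) (u : ℝ) : ℝ :=
  let U := Real.sqrt (1 + k) * u / Real.cos η
  let p := Real.sqrt ((1 - k) / (1 + k))
  (Real.sin η / (2 * Real.sqrt (1 - k))) *
    ((U + Real.sqrt (1 + U ^ 2)) ^ p - (Real.sqrt (1 + U ^ 2) - U) ^ p)

lemma geoGraph_def (k η u : ℝ) :
    geoGraph k η u
      = (Real.sin η / (2 * Real.sqrt (1 - k))) *
        ((Real.sqrt (1 + k) * u / Real.cos η
            + Real.sqrt (1 + (Real.sqrt (1 + k) * u / Real.cos η) ^ 2))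
              ^ Real.sqrt ((1 - k) / (1 + k))
          - (Real.sqrt (1 + (Real.sqrt (1 + k) * u / Real.cos η) ^ 2)
            - Real.sqrt (1 + k) * u / Real.cos η) ^ Real.sqrt ((1 - k) / (1 + k))) := rfl

lemma absU_lt_S (U : ℝ) : |U| < Real.sqrt (1 + U ^ 2) := by
  have h : U ^ 2 < 1 + U ^ 2 := by linarith
  have := Real.sqrt_lt_sqrt (sq_nonneg U) h
  rwa [Real.sqrt_sq_eq_abs] at this

lemma aux_hasDerivAt (A a c p : ℝ) (x : ℝ) :
    HasDerivAt (fun u : ℝ => A * ((a * u / c + Real.sqrt (1 + (a * u / c) ^ 2)) ^ p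
        - (Real.sqrt (1 + (a * u / c) ^ 2) - a * u / c) ^ p))
      (A * (a / c * p * (((a * x / c + Real.sqrt (1 + (a * x / c) ^ 2)) ^ p
        + (Real.sqrt (1 + (a * x / c) ^ 2) - a * x / c) ^ p)
        / Real.sqrt (1 + (a * x / c) ^ 2)))) x := by
  set U : ℝ := a * x / c with hU
  set S : ℝ := Real.sqrt (1 + U ^ 2) with hS
  have hS2 : S ^ 2 = 1 + U ^ 2 := Real.sq_sqrt (by positivity)
  have hS0 : 0 < S := Real.sqrt_pos.2 (by positivity)
  have habs := absU_lt_S U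
  have h2 : U < S := by rw [hS]; exact lt_of_abs_lt habs
  have h1 : -S < U := by rw [hS]; exact neg_lt_of_abs_lt habs
  have hF : 0 < U + S := by linarith
  have hG : 0 < S - U := by linarith
  have hUd : HasDerivAt (fun u : ℝ => a * u / c) (a / c) x := by
    simpa using ((hasDerivAt_id x).const_mul a).div_const c
  have hpow : HasDerivAt (fun u : ℝ => 1 + (a * u / c) ^ 2) (2 * U * (a / c)) x := by
    have := (hUd.pow 2).const_add 1
    simpa [hU, mul_comm, mul_assoc, mul_left_comm] using this
  have hSd : HasDerivAt (fun u : ℝ => Real.sqrt (1 + (a * u / c) ^ 2)) (a / c * U / S) x := by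
    have h2' := hpow.sqrt (by rw [← hU, ← hS2]; positivity)
    convert h2' using 1
    rw [← hU, ← hS]
    field_simp [hS0.ne']
  have hFd : HasDerivAt
      (fun u : ℝ => (a * u / c + Real.sqrt (1 + (a * u / c) ^ 2)) ^ p)
      (a / c * p * (U + S) ^ p / S) x := by
    have hadd : HasDerivAt (fun u : ℝ => a * u / c + Real.sqrt (1 + (a * u / c) ^ 2))
        (a / c + a / c * U / S) x := hUd.add hSd
    have h3 := hadd.rpow_const (p := p) (Or.inl (by rw [← hU, ← hS]; exact hF.ne'))
    convert h3 using 1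
    rw [← hU, ← hS]
    have hmul : (U + S) ^ p = (U + S) * (U + S) ^ (p - 1) := by
      nth_rewrite 1 [show p = 1 + (p - 1) by ring]
      rw [Real.rpow_add hF, Real.rpow_one]
    rw [hmul]
    linear_combination (a / c * p * (U + S) ^ (p - 1)) * mul_inv_cancel₀ hS0.ne'
  have hGd : HasDerivAt
      (fun u : ℝ => (Real.sqrt (1 + (a * u / c) ^ 2) - a * u / c) ^ p)
      (-(a / c * p * (S - U) ^ p / S)) x := by
    have hsub : HasDerivAt (fun u : ℝ => Real.sqrt (1 + (a * u / c) ^ 2) - a * u / c)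
        (a / c * U / S - a / c) x := hSd.sub hUd
    have h3 := hsub.rpow_const (p := p) (Or.inl (by rw [← hU, ← hS]; exact ne_of_gt hG))
    convert h3 using 1
    rw [← hU, ← hS]
    have hmul : (S - U) ^ p = (S - U) * (S - U) ^ (p - 1) := by
      nth_rewrite 1 [show p = 1 + (p - 1) by ring]
      rw [Real.rpow_add hG, Real.rpow_one]
    rw [hmul]
    linear_combination (-(a / c * p * (S - U) ^ (p - 1))) * mul_inv_cancel₀ hS0.ne'
  have : HasDerivAt (fun u : ℝ => A * ((a * u / c + Real.sqrt (1 + (a * u / c) ^ 2)) ^ p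
        - (Real.sqrt (1 + (a * u / c) ^ 2) - a * u / c) ^ p))
      (A * (a / c * p * (U + S) ^ p / S - -(a / c * p * (S - U) ^ p / S))) x :=
    (hFd.sub hGd).const_mul A
  convert this using 1
  ring

set_option maxHeartbeats 1600000 in
/-- The curve `u ↦ (u, v(u))` satisfies `v(0) = 0` and the geodesic ODE
`v′ = √(sin²η + (1-k)v²)/√(cos²η + (1+k)u²)`; in particular `v′(0) = tan η`. -/
theorem stmt_4 (k η : ℝ) (hk : k ∈ Set.Ioo (-1 : ℝ) 1)
    (hη : η ∈ Set.Ioo 0 (Real.pi / 2)) :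
    geoGraph k η 0 = 0 ∧
    (∀ u : ℝ, 0 ≤ u →
      deriv (geoGraph k η) u
        = Real.sqrt (Real.sin η ^ 2 + (1 - k) * (geoGraph k η u) ^ 2)
            / Real.sqrt (Real.cos η ^ 2 + (1 + k) * u ^ 2)) ∧
    deriv (geoGraph k η) 0 = Real.tan η := by
  obtain ⟨hk1, hk2⟩ := hk
  obtain ⟨hη1, hη2⟩ := hη
  have hk1' : (0 : ℝ) < 1 + k := by linarith
  have hk2' : (0 : ℝ) < 1 - k := by linarith
  have hc : 0 < Real.cos η := Real.cos_pos_of_mem_Ioo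
    ⟨by linarith [Real.pi_pos], hη2⟩
  have hs : 0 < Real.sin η := Real.sin_pos_of_pos_of_lt_pi hη1
    (by linarith [Real.pi_pos])
  have hzero : geoGraph k η 0 = 0 := by
    rw [geoGraph_def]
    norm_num
  have hmain : ∀ u : ℝ, deriv (geoGraph k η) u
      = Real.sqrt (Real.sin η ^ 2 + (1 - k) * (geoGraph k η u) ^ 2)
          / Real.sqrt (Real.cos η ^ 2 + (1 + k) * u ^ 2) := by
    intro u
    set a : ℝ := Real.sqrt (1 + k) with ha
    set b : ℝ := Real.sqrt (1 - k) with hb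
    set p : ℝ := Real.sqrt ((1 - k) / (1 + k)) with hp
    set c : ℝ := Real.cos η with hcc
    set s : ℝ := Real.sin η with hss
    have ha0 : 0 < a := Real.sqrt_pos.2 hk1'
    have hb0 : 0 < b := Real.sqrt_pos.2 hk2'
    have ha2 : a ^ 2 = 1 + k := Real.sq_sqrt hk1'.le
    have hb2 : b ^ 2 = 1 - k := Real.sq_sqrt hk2'.le
    have hpba : p = b / a := by
      rw [hp, ha, hb, Real.sqrt_div hk2'.le]
    set U : ℝ := a * u / c with hU
    set S : ℝ := Real.sqrt (1 + U ^ 2) with hS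
    have hS2 : S ^ 2 = 1 + U ^ 2 := Real.sq_sqrt (by positivity)
    have hS0 : 0 < S := Real.sqrt_pos.2 (by positivity)
    have habs := absU_lt_S U
    have h2 : U < S := by rw [hS]; exact lt_of_abs_lt habs
    have h1 : -S < U := by rw [hS]; exact neg_lt_of_abs_lt habs
    have hF : 0 < U + S := by linarith
    have hG : 0 < S - U := by linarith
    have hFG : (U + S) ^ p * (S - U) ^ p = 1 := by
      rw [← Real.mul_rpow hF.le hG.le]
      have h4 : (U + S) * (S - U) = 1 := by nlinarith [hS2]
      rw [h4, Real.one_rpow]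
    -- the derivative
    have hd : HasDerivAt (geoGraph k η)
        ((s / (2 * b)) * (a / c * p * (((U + S) ^ p + (S - U) ^ p) / S))) u := by
      have h := aux_hasDerivAt (s / (2 * b)) a c p u
      have hfun : geoGraph k η = fun u : ℝ =>
          (s / (2 * b)) * ((a * u / c + Real.sqrt (1 + (a * u / c) ^ 2)) ^ p
            - (Real.sqrt (1 + (a * u / c) ^ 2) - a * u / c) ^ p) := by
        funext w
        rw [geoGraph_def]
      rw [hfun]
      exact h
    rw [hd.deriv]
    -- compute the right-hand side
    have hv : geoGraph k η u = (s / (2 * b)) * ((U + S) ^ p - (S - U) ^ p) := by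
      rw [geoGraph_def, ← ha, ← hb, ← hp, ← hcc, ← hss, ← hU, ← hS]
    have hnum : Real.sqrt (s ^ 2 + (1 - k) * (geoGraph k η u) ^ 2)
        = s * ((U + S) ^ p + (S - U) ^ p) / 2 := by
      rw [hv]
      have e1 : (1 - k) * ((s / (2 * b)) * ((U + S) ^ p - (S - U) ^ p)) ^ 2
          = s ^ 2 * ((U + S) ^ p - (S - U) ^ p) ^ 2 / 4 := by
        rw [← hb2]; field_simp [hb0.ne']; ring
      have key : s ^ 2 + (1 - k) * ((s / (2 * b)) * ((U + S) ^ p - (S - U) ^ p)) ^ 2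
          = (s * ((U + S) ^ p + (S - U) ^ p) / 2) ^ 2 := by
        rw [e1]
        linear_combination (-(s ^ 2) : ℝ) * hFG
      rw [key, Real.sqrt_sq (by positivity)]
    have hden : Real.sqrt (c ^ 2 + (1 + k) * u ^ 2) = c * S := by
      have e2 : c ^ 2 + (1 + k) * u ^ 2 = (c * S) ^ 2 := by
        have e3 : (1 + k) * u ^ 2 = c ^ 2 * U ^ 2 := by
          rw [hU, ← ha2]
          field_simp
        rw [e3]
        nlinarith [hS2]
      rw [e2, Real.sqrt_sq (by positivity)]
    rw [hnum, hden]
    have hab : a * p = b := by rw [hpba]; field_simp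
    field_simp [hS0.ne', hc.ne', hb0.ne']
    linear_combination hab
  refine ⟨hzero, fun u _ => hmain u, ?_⟩
  rw [hmain 0, hzero]
  norm_num
  rw [Real.sqrt_sq hs.le, Real.sqrt_sq hc.le, Real.tan_eq_sin_div_cos]
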